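/- arXiv:math/0612063 — 5 statements merged into one kernel-verified Lean document; each statement's English description precedes it below -/
import Mathlib

section
/- For all y ≥ 0 and nonnegative integers m, n with n ≥ m: y^{m+1} ∫₁^∞ e^{-2y(ρ-1)} ρ^m P_n(y(ρ-1)) dρ ≤ 2^{-m} (m+n)! ∑_{j=0}^{m} y^j/j!, where P_n(z) = ∑_{j=0}^{n} (n!/j!) z^j. -/
open MeasureTheory Real Finset

/-- The polynomial `P_n(z) = ∑_{j=0}^n (n!/j!) z^j`. -/
noncomputable def P (n : ℕ) (z : ℝ) : ℝ :=
  ∑ j ∈ Finset.range (n + 1), ((n.factorial : ℝ) / (j.factorial : ℝ)) * z ^ j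

lemma fact2 (m : ℕ) : ∀ n, m ≤ n → 2^m * (m.factorial * n.factorial) ≤ (m+n).factorial := by
  induction m with
  | zero => intro n _; simp
  | succ m ih =>
    intro n h
    have hm : m ≤ n := le_trans (Nat.le_succ m) h
    calc 2^(m+1) * ((m+1).factorial * n.factorial)
        = (2*(m+1)) * (2^m * (m.factorial * n.factorial)) := by
          rw [Nat.factorial_succ]; ring
      _ ≤ (2*(m+1)) * (m+n).factorial := Nat.mul_le_mul_left _ (ih n hm)
      _ ≤ (m+n+1) * (m+n).factorial := Nat.mul_le_mul_right _ (by omega)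
      _ = (m+1+n).factorial := by
          rw [show m+1+n = (m+n)+1 by ring, Nat.factorial_succ]

lemma gamma_int (k : ℕ) {y : ℝ} (hy : 0 < y) :
    ∫ t in Set.Ioi (0:ℝ), t ^ k * Real.exp (-(y * t)) = (k.factorial : ℝ) / y ^ (k+1) := by
  have h := Real.integral_rpow_mul_exp_neg_mul_Ioi (a := (k:ℝ)+1) (by positivity) hy
  rw [show ((k:ℝ)+1) - 1 = (k:ℝ) by ring] at h
  simp_rw [Real.rpow_natCast] at h
  rw [h, Real.Gamma_nat_eq_factorial,
    show ((k:ℝ)+1) = ((k+1 : ℕ):ℝ) by push_cast; ring, Real.rpow_natCast,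
    div_pow, one_pow]
  ring

lemma integrable_pow_exp (k : ℕ) {y : ℝ} (hy : 0 < y) :
    IntegrableOn (fun t : ℝ => t ^ k * Real.exp (-(y * t))) (Set.Ioi 0) := by
  have h := integrableOn_rpow_mul_exp_neg_mul_rpow (s := (k:ℝ)) (p := 1) (b := y)
    (neg_one_lt_zero.trans_le (Nat.cast_nonneg k)) zero_lt_one hy
  simpa [Real.rpow_natCast, neg_mul] using h

theorem stmt_2 (y : ℝ) (hy : 0 ≤ y) (m n : ℕ) (hmn : m ≤ n) :
    y ^ (m + 1) *
        ∫ ρ in Set.Ioi (1:ℝ), Real.exp (-2 * y * (ρ - 1)) * ρ ^ m * P n (y * (ρ - 1)) ≤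
      ((m + n).factorial : ℝ) / 2 ^ m *
        ∑ j ∈ Finset.range (m + 1), y ^ j / (j.factorial : ℝ) := by
  rcases eq_or_lt_of_le hy with h0 | hy
  · rw [← h0]
    simp only [zero_pow (Nat.succ_ne_zero m), zero_mul]
    positivity
  have hy0 : (0:ℝ) ≤ y := hy.le
  -- shift the integral to Ioi 0
  have hshift : (∫ ρ in Set.Ioi (1:ℝ),
      Real.exp (-2 * y * (ρ - 1)) * ρ ^ m * P n (y * (ρ - 1))) =
      ∫ t in Set.Ioi (0:ℝ), Real.exp (-2 * y * t) * (t+1) ^ m * P n (y * t) := by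
    have hmp : MeasurePreserving (fun t : ℝ => t + 1) volume volume :=
      measurePreserving_add_right volume 1
    have hemb : MeasurableEmbedding (fun t : ℝ => t + 1) :=
      (Homeomorph.addRight (1:ℝ)).measurableEmbedding
    have hpre : (fun t : ℝ => t + 1) ⁻¹' Set.Ioi 1 = Set.Ioi 0 := by
      ext t; simp
    have h := hmp.setIntegral_preimage_emb hemb
      (fun ρ => Real.exp (-2 * y * (ρ - 1)) * ρ ^ m * P n (y * (ρ - 1))) (Set.Ioi 1)
    rw [hpre] at h
    rw [← h]
    congr 1 with t
    simp [add_sub_cancel_right]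
  rw [hshift]
  -- the dominating function
  have hgsum : (fun t : ℝ => (t+1) ^ m * Real.exp (-(y*t))) =
      fun t => ∑ k ∈ Finset.range (m+1), (m.choose k : ℝ) * (t ^ k * Real.exp (-(y*t))) := by
    funext t
    rw [add_pow, Finset.sum_mul]
    congr 1 with k
    simp
    ring
  have hgint : IntegrableOn (fun t : ℝ => (t+1) ^ m * Real.exp (-(y*t))) (Set.Ioi 0) := by
    rw [hgsum]
    exact integrable_finset_sum _ fun k _ => (integrable_pow_exp k hy).const_mul _
  have hJ : (∫ t in Set.Ioi (0:ℝ), (t+1) ^ m * Real.exp (-(y*t))) =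
      ∑ k ∈ Finset.range (m+1), (m.choose k : ℝ) * ((k.factorial : ℝ) / y ^ (k+1)) := by
    rw [hgsum, integral_finset_sum _ fun k _ => (integrable_pow_exp k hy).const_mul _]
    congr 1 with k
    rw [MeasureTheory.integral_const_mul, gamma_int k hy]
  -- pointwise bound on P
  have hPb : ∀ t : ℝ, 0 ≤ t → P n (y * t) ≤ (n.factorial : ℝ) * Real.exp (y * t) := by
    intro t ht
    have h1 : P n (y * t) =
        (n.factorial : ℝ) * ∑ j ∈ Finset.range (n+1), (y*t)^j / j.factorial := by
      rw [P, Finset.mul_sum]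
      congr 1 with j
      ring
    rw [h1]
    exact mul_le_mul_of_nonneg_left
      (Real.sum_le_exp_of_nonneg (mul_nonneg hy0 ht) (n+1)) (by positivity)
  -- bound the integral
  have hb : (∫ t in Set.Ioi (0:ℝ), Real.exp (-2 * y * t) * (t+1) ^ m * P n (y * t)) ≤
      ∫ t in Set.Ioi (0:ℝ), (n.factorial : ℝ) * ((t+1) ^ m * Real.exp (-(y*t))) := by
    apply integral_mono_of_nonneg
    · filter_upwards [ae_restrict_mem measurableSet_Ioi] with t ht
      have ht' : (0:ℝ) ≤ t := le_of_lt ht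
      have hP : 0 ≤ P n (y * t) := Finset.sum_nonneg fun j _ =>
        mul_nonneg (div_nonneg (Nat.cast_nonneg _) (Nat.cast_nonneg _))
          (pow_nonneg (mul_nonneg hy0 ht') j)
      have h2 : (0:ℝ) ≤ Real.exp (-2 * y * t) * (t+1)^m := by positivity
      exact mul_nonneg h2 hP
    · exact hgint.const_mul _
    · filter_upwards [ae_restrict_mem measurableSet_Ioi] with t ht
      have ht' : (0:ℝ) ≤ t := le_of_lt ht
      calc Real.exp (-2 * y * t) * (t+1) ^ m * P n (y * t)
          ≤ Real.exp (-2 * y * t) * (t+1)^m * ((n.factorial : ℝ) * Real.exp (y * t)) := by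
            apply mul_le_mul_of_nonneg_left (hPb t ht') (by positivity)
        _ = (Real.exp (-2 * y * t) * Real.exp (y * t)) * ((t+1)^m * (n.factorial : ℝ)) := by
            ring
        _ = (n.factorial : ℝ) * ((t+1)^m * Real.exp (-(y*t))) := by
            rw [← Real.exp_add, show (-2*y*t + y*t) = -(y*t) by ring]; ring
  rw [MeasureTheory.integral_const_mul, hJ] at hb
  -- algebra
  have hy' : y ≠ 0 := ne_of_gt hy
  have t1 : ∀ k ∈ Finset.range (m+1),
      y^(m+1) * ((m.choose k:ℝ) * ((k.factorial:ℝ)/y^(k+1))) =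
      (m.factorial:ℝ)/((m-k).factorial:ℝ) * y^(m-k) := by
    intro k hk
    rw [Finset.mem_range] at hk
    have hk' : k ≤ m := Nat.lt_succ_iff.mp hk
    have hcf : (m.choose k:ℝ) * (k.factorial:ℝ) * ((m-k).factorial:ℝ) = (m.factorial:ℝ) := by
      exact_mod_cast congrArg (Nat.cast (R:=ℝ)) (Nat.choose_mul_factorial_mul_factorial hk')
    have hpow : y^(m+1) = y^(m-k) * y^(k+1) := by
      rw [← pow_add]; congr 1; omega
    have hfk : ((m-k).factorial:ℝ) ≠ 0 := Nat.cast_ne_zero.mpr (Nat.factorial_ne_zero _)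
    calc y^(m+1) * ((m.choose k:ℝ) * ((k.factorial:ℝ)/y^(k+1)))
        = ((m.choose k:ℝ) * (k.factorial:ℝ)) * (y^(m+1)/y^(k+1)) := by ring
      _ = ((m.choose k:ℝ) * (k.factorial:ℝ)) * y^(m-k) := by
          rw [hpow, mul_div_cancel_right₀ _ (pow_ne_zero _ hy')]
      _ = (m.factorial:ℝ)/((m-k).factorial:ℝ) * y^(m-k) := by
          congr 1
          field_simp
          linear_combination hcf
  have t2 : ∑ k ∈ Finset.range (m+1), (m.factorial:ℝ)/((m-k).factorial:ℝ) * y^(m-k)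
      = ∑ j ∈ Finset.range (m+1), (m.factorial:ℝ)/(j.factorial:ℝ) * y^j := by
    have h := Finset.sum_range_reflect
      (fun j => (m.factorial:ℝ)/(j.factorial:ℝ) * y^j) (m+1)
    simp only [Nat.add_sub_cancel] at h
    exact h
  have key : y^(m+1) * ((n.factorial:ℝ) *
      ∑ k ∈ Finset.range (m+1), (m.choose k : ℝ) * ((k.factorial : ℝ) / y ^ (k+1))) =
      (n.factorial:ℝ) * ((m.factorial:ℝ) *
        ∑ j ∈ Finset.range (m+1), y^j/(j.factorial:ℝ)) := by
    have e1 : y^(m+1) * ((n.factorial:ℝ) *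
        ∑ k ∈ Finset.range (m+1), (m.choose k : ℝ) * ((k.factorial : ℝ) / y ^ (k+1))) =
        (n.factorial:ℝ) * ∑ k ∈ Finset.range (m+1),
          y^(m+1) * ((m.choose k : ℝ) * ((k.factorial : ℝ) / y ^ (k+1))) := by
      rw [mul_left_comm, Finset.mul_sum]
    have e2 : ∑ j ∈ Finset.range (m+1), (m.factorial:ℝ)/(j.factorial:ℝ) * y^j =
        (m.factorial:ℝ) * ∑ j ∈ Finset.range (m+1), y^j/(j.factorial:ℝ) := by
      rw [Finset.mul_sum]
      exact Finset.sum_congr rfl fun j _ => by ring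
    rw [e1, Finset.sum_congr rfl t1, t2, e2]
  have hS : (0:ℝ) ≤ ∑ j ∈ Finset.range (m+1), y^j/(j.factorial:ℝ) :=
    Finset.sum_nonneg fun j _ => div_nonneg (pow_nonneg hy0 j) (Nat.cast_nonneg _)
  have hfac : (n.factorial:ℝ) * (m.factorial:ℝ) ≤ ((m+n).factorial:ℝ)/2^m := by
    rw [le_div_iff₀ (by positivity : (0:ℝ) < 2^m)]
    have h := fact2 m n hmn
    have h' : ((2^m * (m.factorial * n.factorial) : ℕ):ℝ) ≤ ((m+n).factorial:ℝ) :=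
      Nat.cast_le.mpr h
    push_cast at h'
    calc (n.factorial:ℝ) * (m.factorial:ℝ) * 2^m
        = 2^m * ((m.factorial:ℝ) * (n.factorial:ℝ)) := by ring
      _ ≤ ((m+n).factorial:ℝ) := h'
  calc y ^ (m + 1) * ∫ t in Set.Ioi (0:ℝ),
          Real.exp (-2 * y * t) * (t+1) ^ m * P n (y * t)
      ≤ y ^ (m+1) * ((n.factorial:ℝ) *
          ∑ k ∈ Finset.range (m+1), (m.choose k : ℝ) * ((k.factorial : ℝ) / y ^ (k+1))) :=
        mul_le_mul_of_nonneg_left hb (by positivity)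
    _ = ((n.factorial:ℝ) * (m.factorial:ℝ)) *
          ∑ j ∈ Finset.range (m+1), y^j/(j.factorial:ℝ) := by rw [key]; ring
    _ ≤ (((m+n).factorial:ℝ)/2^m) *
          ∑ j ∈ Finset.range (m+1), y^j/(j.factorial:ℝ) :=
        mul_le_mul_of_nonneg_right hfac hS
end

section
/- For all y ≥ 0 and nonnegative integers m, n with n ≥ m: y^{m+1} ∫₀^∞ e^{-y(ρ-1)(1+sgn(ρ-1))} ρ^m P_n(y|1-ρ|) dρ ≤ m!·n!·Q_{m+n+1}(y), where P_n(z) = ∑_{j=0}^n (n!/j!) z^j and Q_N(y) = ∑_{j=0}^N 2^{N-j} y^j/j!. -/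
open MeasureTheory Real Finset

/-- The polynomial `Q_N(y) = ∑_{j=0}^N 2^{N-j} y^j / j!`. -/
noncomputable def Q (N : ℕ) (y : ℝ) : ℝ :=
  ∑ j ∈ Finset.range (N + 1), 2 ^ (N - j) * y ^ j / (j.factorial : ℝ)

open Set

lemma aux_integrableOn_pow_exp (p : ℕ) {r : ℝ} (hr : 0 < r) :
    IntegrableOn (fun t : ℝ => t ^ p * Real.exp (-(r * t))) (Ioi 0) := by
  have := integrableOn_rpow_mul_exp_neg_mul_rpow (p := 1) (s := (p : ℝ)) (b := r)
    (lt_of_lt_of_le neg_one_lt_zero (Nat.cast_nonneg p)) zero_lt_one hr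
  simpa [Real.rpow_natCast, neg_mul] using this

lemma aux_integral_pow_exp (p : ℕ) {r : ℝ} (hr : 0 < r) :
    ∫ t in Ioi (0:ℝ), t ^ p * Real.exp (-(r * t)) = (p.factorial : ℝ) / r ^ (p + 1) := by
  have h := Real.integral_rpow_mul_exp_neg_mul_Ioi (a := (p : ℝ) + 1) (r := r)
    (by positivity) hr
  have h2 : ∫ t in Ioi (0:ℝ), t ^ ((p : ℝ) + 1 - 1) * Real.exp (-(r * t))
      = ∫ t in Ioi (0:ℝ), t ^ p * Real.exp (-(r * t)) := by
    refine setIntegral_congr_fun measurableSet_Ioi (fun t ht => ?_)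
    rw [add_sub_cancel_right, Real.rpow_natCast]
  rw [h2] at h
  rw [h, Real.Gamma_nat_eq_factorial p]
  have : ((p : ℝ) + 1) = ((p + 1 : ℕ) : ℝ) := by push_cast; ring
  rw [this, Real.rpow_natCast, one_div, inv_pow]
  field_simp

lemma aux_prod_fact (a b : ℕ) : (a.factorial : ℂ) * ∏ j ∈ Finset.range (b + 1), ((a:ℂ) + 1 + j)
    = ((a + b + 1).factorial : ℂ) := by
  induction b with
  | zero =>
      have : a + 0 + 1 = a + 1 := by omega
      rw [this, Nat.factorial_succ]
      simp; ring
  | succ b ih =>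
      rw [Finset.prod_range_succ, ← mul_assoc, ih]
      have h1 : a + (b + 1) + 1 = (a + b + 1) + 1 := by omega
      rw [h1, Nat.factorial_succ (a + b + 1)]
      push_cast; ring

lemma aux_beta_nat (a b : ℕ) : ∫ t in (0:ℝ)..1, t ^ a * (1 - t) ^ b
    = (a.factorial : ℝ) * (b.factorial : ℝ) / ((a + b + 1).factorial : ℝ) := by
  have h := Complex.betaIntegral_eval_nat_add_one_right (u := (a : ℂ) + 1)
    (by simp; positivity) b
  rw [Complex.betaIntegral] at h
  have h2 : ∫ x in (0:ℝ)..1, (x:ℂ) ^ ((a:ℂ) + 1 - 1) * (1 - (x:ℂ)) ^ ((b:ℂ) + 1 - 1)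
      = ((∫ t in (0:ℝ)..1, t ^ a * (1 - t) ^ b : ℝ) : ℂ) := by
    rw [← intervalIntegral.integral_ofReal]
    refine intervalIntegral.integral_congr (fun x hx => ?_)
    rw [add_sub_cancel_right, add_sub_cancel_right, Complex.cpow_natCast, Complex.cpow_natCast]
    push_cast; ring
  rw [h2] at h
  have h3 : (∏ j ∈ Finset.range (b + 1), ((a:ℂ) + 1 + j))
      = ((a+b+1).factorial : ℂ) / (a.factorial : ℂ) := by
    rw [eq_div_iff (by exact_mod_cast Nat.factorial_ne_zero a), mul_comm, aux_prod_fact]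
  rw [h3] at h
  have h4 : ((b.factorial : ℂ)) / (((a+b+1).factorial : ℂ) / (a.factorial : ℂ))
      = (((a.factorial : ℝ) * (b.factorial : ℝ) / ((a+b+1).factorial : ℝ) : ℝ) : ℂ) := by
    have n1 : ((a+b+1).factorial : ℂ) ≠ 0 := by exact_mod_cast Nat.factorial_ne_zero _
    have n2 : ((a).factorial : ℂ) ≠ 0 := by exact_mod_cast Nat.factorial_ne_zero _
    push_cast
    field_simp
  rw [h4] at h
  exact_mod_cast h

lemma aux_shift_Ioi (f : ℝ → ℝ) : ∫ x in Ioi (1:ℝ), f x = ∫ x in Ioi (0:ℝ), f (x + 1) := by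
  have hmp : MeasurePreserving (fun x : ℝ => x + 1) volume volume :=
    measurePreserving_add_right volume 1
  have hme : MeasurableEmbedding (fun x : ℝ => x + 1) :=
    (Homeomorph.addRight (1:ℝ)).measurableEmbedding
  have := hmp.setIntegral_image_emb hme f (Ioi 0)
  rwa [image_add_const_Ioi, zero_add] at this

lemma aux_shift_Ioi_int (f : ℝ → ℝ) :
    IntegrableOn (fun x => f (x + 1)) (Ioi (0:ℝ)) ↔ IntegrableOn f (Ioi (1:ℝ)) := by
  have hmp : MeasurePreserving (fun x : ℝ => x + 1) volume volume :=
    measurePreserving_add_right volume 1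
  have hme : MeasurableEmbedding (fun x : ℝ => x + 1) :=
    (Homeomorph.addRight (1:ℝ)).measurableEmbedding
  have := hmp.integrableOn_image (e := fun x : ℝ => x + 1) hme (f := f) (s := Ioi 0)
  rw [image_add_const_Ioi, zero_add] at this
  exact this.symm

lemma aux_choose_sum_le (m n : ℕ) :
    ∑ j ∈ Finset.range (n+1), ((j+m).choose m : ℝ) * (1/2)^j ≤ 2^(m+1) := by
  induction m with
  | zero =>
      simp only [Nat.add_zero, Nat.choose_zero_right, Nat.cast_one, one_mul]
      simpa using sum_geometric_two_le (n+1)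
  | succ m ih =>
      have pascal : ∀ j : ℕ, ((j+(m+1)).choose (m+1) : ℝ)
          = ((j+m).choose m : ℝ) + ((j+m).choose (m+1) : ℝ) := by
        intro j
        have : j + (m+1) = (j+m) + 1 := by omega
        rw [this, Nat.choose_succ_succ]
        push_cast; ring
      have hsplit : ∑ j ∈ Finset.range (n+1), ((j+(m+1)).choose (m+1) : ℝ) * (1/2)^j
          = (∑ j ∈ Finset.range (n+1), ((j+m).choose m : ℝ) * (1/2)^j)
            + ∑ j ∈ Finset.range (n+1), ((j+m).choose (m+1) : ℝ) * (1/2)^j := by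
        rw [← Finset.sum_add_distrib]
        exact Finset.sum_congr rfl fun j _ => by rw [pascal]; ring
      have hR : ∑ j ∈ Finset.range (n+1), ((j+m).choose (m+1) : ℝ) * (1/2)^j
          ≤ (1/2) * ∑ j ∈ Finset.range (n+1), ((j+(m+1)).choose (m+1) : ℝ) * (1/2)^j := by
        rw [Finset.sum_range_succ']
        have h0 : ((0+m).choose (m+1) : ℝ) * (1/2)^0 = 0 := by
          simp [Nat.choose_eq_zero_of_lt (by omega : m < m + 1)]
        rw [h0, add_zero]
        have key : ∀ i : ℕ, ((i+1+m).choose (m+1) : ℝ) * (1/2)^(i+1)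
            = (1/2) * (((i+(m+1)).choose (m+1) : ℝ) * (1/2)^i) := by
          intro i
          have : i + 1 + m = i + (m+1) := by omega
          rw [this]; ring
        rw [Finset.sum_congr rfl fun i _ => key i, ← Finset.mul_sum]
        have hmono : ∑ i ∈ Finset.range n, ((i+(m+1)).choose (m+1) : ℝ) * (1/2)^i
            ≤ ∑ i ∈ Finset.range (n+1), ((i+(m+1)).choose (m+1) : ℝ) * (1/2)^i := by
          refine Finset.sum_le_sum_of_subset_of_nonneg
            (Finset.range_subset_range.2 (by omega)) fun i _ _ => by positivity
        linarith
      have h2 : (0:ℝ) ≤ ∑ j ∈ Finset.range (n+1), ((j+(m+1)).choose (m+1) : ℝ) * (1/2)^j :=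
        Finset.sum_nonneg fun j _ => by positivity
      rw [hsplit] at *
      have : (2:ℝ)^(m+1+1) = 2 * 2^(m+1) := by ring
      linarith

lemma aux_P_nonneg (n : ℕ) {z : ℝ} (hz : 0 ≤ z) : 0 ≤ P n z :=
  Finset.sum_nonneg fun j _ => by positivity

lemma aux_P_continuous (n : ℕ) : Continuous (P n) := by unfold P; continuity

lemma aux_pow_bound (m : ℕ) {ρ : ℝ} (hρ : 1 < ρ) : ρ ^ m ≤ 2 ^ m * (1 + (ρ - 1) ^ m) := by
  set t := ρ - 1 with ht
  have ht0 : 0 < t := by simp [ht]; linarith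
  have htm : 0 ≤ t ^ m := by positivity
  rcases le_or_gt t 1 with h | h
  · have : ρ ^ m ≤ 2 ^ m := pow_le_pow_left₀ (by linarith) (by simp [ht] at *; linarith) m
    nlinarith [pow_pos (by norm_num : (0:ℝ) < 2) m]
  · have h1 : ρ ≤ 2 * t := by simp only [ht]; linarith
    have : ρ ^ m ≤ (2 * t) ^ m := pow_le_pow_left₀ (by linarith) h1 m
    rw [mul_pow] at this
    nlinarith [pow_pos (by norm_num : (0:ℝ) < 2) m]

lemma aux_compare (y : ℝ) (hy : 0 < y) (m n : ℕ) (hmn : m ≤ n) :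
    (∑ j ∈ Finset.range (n+1),
        (m.factorial : ℝ) * (n.factorial : ℝ) * y ^ (m+1+j) / ((m+j+1).factorial : ℝ))
      + (2^m * (n.factorial : ℝ) * y^m + (m.factorial : ℝ) * (n.factorial : ℝ) * 2^m)
      ≤ (m.factorial : ℝ) * (n.factorial : ℝ) * Q (m + n + 1) y := by
  set f : ℕ → ℝ := fun i =>
    (m.factorial : ℝ) * (n.factorial : ℝ) * (2^((m+n+1)-i) * y^i / (i.factorial : ℝ)) with hf_def
  have hQeq : (m.factorial : ℝ) * (n.factorial : ℝ) * Q (m + n + 1) y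
      = ∑ i ∈ Finset.range (m+n+2), f i := by
    rw [Q, Finset.mul_sum]
  have hQsplit : ∑ i ∈ Finset.range (m+n+2), f i
      = (∑ i ∈ Finset.range (m+1), f i) + ∑ j ∈ Finset.range (n+1), f (m+1+j) := by
    have e2 : ∑ i ∈ Finset.Ico (m+1) (m+n+2), f i = ∑ j ∈ Finset.range (n+1), f (m+1+j) := by
      rw [Finset.sum_Ico_eq_sum_range]
      have hnn : m+n+2 - (m+1) = n+1 := by omega
      rw [hnn]
    rw [Finset.range_eq_Ico, ← Finset.sum_Ico_consecutive f (Nat.zero_le (m+1))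
      (by omega : m+1 ≤ m+n+2), e2, ← Finset.range_eq_Ico]
  have hfnn : ∀ i, 0 ≤ f i := fun i => by rw [hf_def]; positivity
  have hT1le : ∑ j ∈ Finset.range (n+1),
      (m.factorial : ℝ) * (n.factorial : ℝ) * y ^ (m+1+j) / ((m+j+1).factorial : ℝ)
      ≤ ∑ j ∈ Finset.range (n+1), f (m+1+j) := by
    refine Finset.sum_le_sum fun j hj => ?_
    rw [hf_def]
    have hidx : m+j+1 = m+1+j := by omega
    rw [hidx]
    have h1 : (1:ℝ) ≤ 2^((m+n+1)-(m+1+j)) := one_le_pow₀ (by norm_num)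
    have h0 : (0:ℝ) ≤ (m.factorial : ℝ) * (n.factorial : ℝ) * y^(m+1+j)
        / ((m+1+j).factorial : ℝ) := by positivity
    calc (m.factorial : ℝ) * (n.factorial : ℝ) * y ^ (m+1+j) / ((m+1+j).factorial : ℝ)
        = ((m.factorial : ℝ) * (n.factorial : ℝ) * y ^ (m+1+j) / ((m+1+j).factorial : ℝ)) * 1 := by
          ring
      _ ≤ ((m.factorial : ℝ) * (n.factorial : ℝ) * y ^ (m+1+j) / ((m+1+j).factorial : ℝ))
          * 2^((m+n+1)-(m+1+j)) := mul_le_mul_of_nonneg_left h1 h0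
      _ = (m.factorial : ℝ) * (n.factorial : ℝ)
          * (2^((m+n+1)-(m+1+j)) * y^(m+1+j) / ((m+1+j).factorial : ℝ)) := by ring
  have hT23le : 2^m * (n.factorial : ℝ) * y^m + (m.factorial : ℝ) * (n.factorial : ℝ) * 2^m
      ≤ ∑ i ∈ Finset.range (m+1), f i := by
    rcases Nat.eq_zero_or_pos m with hm0 | hm0
    · subst hm0
      have hf0v : f 0 = (n.factorial : ℝ) * 2^(n+1) := by
        simp only [hf_def]
        norm_num
      rw [Finset.range_one, Finset.sum_singleton, hf0v]
      have h2 : (2:ℝ) ≤ 2^(n+1) := by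
        calc (2:ℝ) = 2^1 := by norm_num
          _ ≤ 2^(n+1) := pow_le_pow_right₀ (by norm_num) (by omega)
      have hn0 : (0:ℝ) < (n.factorial : ℝ) := by exact_mod_cast Nat.factorial_pos n
      simp only [pow_zero, one_mul, Nat.factorial_zero, Nat.cast_one]
      nlinarith
    · have hsub : ({0, m} : Finset ℕ) ⊆ Finset.range (m+1) := by
        intro i hi
        simp only [Finset.mem_insert, Finset.mem_singleton] at hi
        rcases hi with h | h <;> simp [Finset.mem_range] <;> omega
      have hpair : ∑ i ∈ ({0, m} : Finset ℕ), f i = f 0 + f m :=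
        Finset.sum_pair (by omega : (0:ℕ) ≠ m)
      have hle : ∑ i ∈ ({0, m} : Finset ℕ), f i ≤ ∑ i ∈ Finset.range (m+1), f i :=
        Finset.sum_le_sum_of_subset_of_nonneg hsub fun i _ _ => hfnn i
      rw [hpair] at hle
      have hf0v : f 0 = (m.factorial : ℝ) * (n.factorial : ℝ) * 2^(m+n+1) := by
        simp only [hf_def]
        norm_num
      have hfmv : f m = (n.factorial : ℝ) * 2^(n+1) * y^m := by
        simp only [hf_def]
        have hidx : (m+n+1)-m = n+1 := by omega
        rw [hidx]
        have hmf : (m.factorial : ℝ) ≠ 0 := by exact_mod_cast Nat.factorial_ne_zero m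
        field_simp
      rw [hf0v, hfmv] at hle
      have h1 : (2:ℝ)^m ≤ 2^(m+n+1) := pow_le_pow_right₀ (by norm_num) (by omega)
      have h2 : (2:ℝ)^m ≤ 2^(n+1) := pow_le_pow_right₀ (by norm_num) (by omega)
      have h0a : (0:ℝ) ≤ (m.factorial : ℝ) * (n.factorial : ℝ) := by positivity
      have h0b : (0:ℝ) ≤ (n.factorial : ℝ) * y^m := by positivity
      nlinarith
  rw [hQeq, hQsplit]
  linarith

set_option maxHeartbeats 2000000 in
theorem stmt_3' (y : ℝ) (hy : 0 < y) (m n : ℕ) (hmn : m ≤ n) :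
    y ^ (m + 1) *
        ∫ ρ in Set.Ioi (0:ℝ),
          Real.exp (-(y * (ρ - 1)) * (1 + Real.sign (ρ - 1))) * ρ ^ m * P n (y * |1 - ρ|) ≤
      (m.factorial : ℝ) * (n.factorial : ℝ) * Q (m + n + 1) y := by
  set r : ℝ := 2 * y with hr_def
  have hr : 0 < r := by positivity
  set g : ℝ → ℝ := fun ρ =>
    Real.exp (-(y * (ρ - 1)) * (1 + Real.sign (ρ - 1))) * ρ ^ m * P n (y * |1 - ρ|) with hg_def
  set g1 : ℝ → ℝ := fun ρ => ρ ^ m * P n (y * (1 - ρ)) with hg1_def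
  set h2 : ℝ → ℝ := fun t => 2 ^ m * (1 + t ^ m) * P n (y * t) * Real.exp (-(r * t)) with hh2_def
  set H : ℝ → ℝ := fun ρ => if ρ ≤ 1 then g1 ρ else h2 (ρ - 1) with hH_def
  set c : ℕ → ℝ := fun j => (n.factorial : ℝ) / (j.factorial : ℝ) * y ^ j * 2 ^ m with hc_def
  -- pointwise identities
  have hEq1 : ∀ ρ : ℝ, ρ ∈ Ioc (0:ℝ) 1 → g ρ = g1 ρ := by
    intro ρ hρ
    have habs : |1 - ρ| = 1 - ρ := abs_of_nonneg (by linarith [hρ.2])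
    have hexp : Real.exp (-(y * (ρ - 1)) * (1 + Real.sign (ρ - 1))) = 1 := by
      rcases lt_or_eq_of_le hρ.2 with h | h
      · rw [Real.sign_of_neg (by linarith : ρ - 1 < 0)]; norm_num
      · rw [h]; norm_num
    simp only [hg_def, hg1_def, hexp, habs, one_mul]
  have hEq2 : ∀ ρ : ℝ, 1 < ρ →
      g ρ = Real.exp (-(r * (ρ - 1))) * ρ ^ m * P n (y * (ρ - 1)) := by
    intro ρ hρ
    have habs : |1 - ρ| = ρ - 1 := by rw [abs_of_nonpos (by linarith)]; ring
    have hsgn : Real.sign (ρ - 1) = 1 := Real.sign_of_pos (by linarith)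
    have hexp : -(y * (ρ - 1)) * (1 + Real.sign (ρ - 1)) = -(r * (ρ - 1)) := by
      rw [hsgn, hr_def]; ring
    simp only [hg_def, hexp, habs]
  -- h2 as a finite sum
  have hh2sum : ∀ t : ℝ, h2 t = ∑ j ∈ Finset.range (n+1),
      c j * (t ^ j * Real.exp (-(r * t)) + t ^ (m + j) * Real.exp (-(r * t))) := by
    intro t
    simp only [hh2_def, P, Finset.mul_sum, Finset.sum_mul]
    refine Finset.sum_congr rfl fun j _ => ?_
    simp only [hc_def, mul_pow]
    ring
  -- integrability
  have hg1int : IntegrableOn g1 (Ioc (0:ℝ) 1) := by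
    apply Continuous.integrableOn_Ioc
    exact (continuous_pow m).mul ((aux_P_continuous n).comp (by continuity))
  have hh2int : IntegrableOn h2 (Ioi (0:ℝ)) := by
    rw [funext hh2sum]
    apply integrable_finset_sum
    intro j _
    exact (((aux_integrableOn_pow_exp j hr).add (aux_integrableOn_pow_exp (m+j) hr)).const_mul _)
  have hshiftint : IntegrableOn (fun ρ => h2 (ρ - 1)) (Ioi (1:ℝ)) := by
    rw [← aux_shift_Ioi_int]
    simpa using hh2int
  have hHint1 : IntegrableOn H (Ioc (0:ℝ) 1) := by
    refine hg1int.congr_fun (fun ρ hρ => ?_) measurableSet_Ioc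
    simp only [hH_def, if_pos hρ.2]
  have hHint2 : IntegrableOn H (Ioi (1:ℝ)) := by
    refine hshiftint.congr_fun (fun ρ hρ => ?_) measurableSet_Ioi
    simp only [hH_def, if_neg (not_le.2 (show (1:ℝ) < ρ from hρ))]
  have hunion : Ioc (0:ℝ) 1 ∪ Ioi (1:ℝ) = Ioi (0:ℝ) := Set.Ioc_union_Ioi_eq_Ioi zero_le_one
  have hHint : IntegrableOn H (Ioi (0:ℝ)) := by
    rw [← hunion]; exact hHint1.union hHint2
  -- step 1: monotone comparison
  have hstep1 : (∫ ρ in Ioi (0:ℝ), g ρ) ≤ ∫ ρ in Ioi (0:ℝ), H ρ := by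
    refine integral_mono_of_nonneg ?_ hHint ?_
    · refine (ae_restrict_iff' measurableSet_Ioi).2 (Filter.Eventually.of_forall fun ρ hρ => ?_)
      simp only [hg_def]
      have h1 : (0:ℝ) ≤ y * |1 - ρ| := by positivity
      have := aux_P_nonneg n h1
      have hρ0 : (0:ℝ) < ρ := hρ
      positivity
    · refine (ae_restrict_iff' measurableSet_Ioi).2 (Filter.Eventually.of_forall fun ρ hρ => ?_)
      have hρ0 : (0:ℝ) < ρ := hρ
      by_cases hρ1 : ρ ≤ 1
      · rw [hEq1 ρ ⟨hρ0, hρ1⟩]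
        simp only [hH_def, if_pos hρ1]
        exact le_refl _
      · push_neg at hρ1
        rw [hEq2 ρ hρ1]
        simp only [hH_def, if_neg (not_le.2 hρ1), hh2_def]
        have hP : 0 ≤ P n (y * (ρ - 1)) := aux_P_nonneg n (by nlinarith)
        have hE : 0 ≤ Real.exp (-(r * (ρ - 1))) := (Real.exp_pos _).le
        have hpb := aux_pow_bound m hρ1
        calc Real.exp (-(r * (ρ - 1))) * ρ ^ m * P n (y * (ρ - 1))
            ≤ Real.exp (-(r * (ρ - 1))) * (2 ^ m * (1 + (ρ - 1) ^ m)) * P n (y * (ρ - 1)) := by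
              apply mul_le_mul_of_nonneg_right _ hP
              exact mul_le_mul_of_nonneg_left hpb hE
          _ = 2 ^ m * (1 + (ρ - 1) ^ m) * P n (y * (ρ - 1)) * Real.exp (-(r * (ρ - 1))) := by ring
  -- step 2: split H
  have hstep2 : (∫ ρ in Ioi (0:ℝ), H ρ)
      = (∫ ρ in Ioc (0:ℝ) 1, g1 ρ) + ∫ t in Ioi (0:ℝ), h2 t := by
    rw [← hunion, setIntegral_union (Ioc_disjoint_Ioi le_rfl) measurableSet_Ioi hHint1 hHint2]
    congr 1
    · refine setIntegral_congr_fun measurableSet_Ioc (fun ρ hρ => ?_)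
      simp only [hH_def, if_pos hρ.2]
    · have e1 : (∫ ρ in Ioi (1:ℝ), H ρ) = ∫ ρ in Ioi (1:ℝ), h2 (ρ - 1) := by
        refine setIntegral_congr_fun measurableSet_Ioi (fun ρ hρ => ?_)
        simp only [hH_def, if_neg (not_le.2 (show (1:ℝ) < ρ from hρ))]
      rw [e1, aux_shift_Ioi (fun ρ => h2 (ρ - 1))]
      simp
  -- step 3: value of the Ioc piece
  have hstep3 : (∫ ρ in Ioc (0:ℝ) 1, g1 ρ)
      = ∑ j ∈ Finset.range (n+1), (n.factorial : ℝ) / (j.factorial : ℝ) * y ^ j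
          * ((m.factorial : ℝ) * (j.factorial : ℝ) / ((m + j + 1).factorial : ℝ)) := by
    have hfe : ∀ ρ : ℝ, g1 ρ = ∑ j ∈ Finset.range (n+1),
        ((n.factorial : ℝ) / (j.factorial : ℝ) * y ^ j) * (ρ ^ m * (1 - ρ) ^ j) := by
      intro ρ
      simp only [hg1_def, P, Finset.mul_sum]
      refine Finset.sum_congr rfl fun j _ => ?_
      rw [mul_pow]; ring
    rw [funext hfe, integral_finset_sum]
    · refine Finset.sum_congr rfl fun j _ => ?_
      rw [integral_const_mul]
      congr 1
      rw [← intervalIntegral.integral_of_le zero_le_one]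
      exact aux_beta_nat m j
    · intro j _
      apply Integrable.const_mul
      apply Continuous.integrableOn_Ioc
      exact (continuous_pow m).mul ((continuous_const.sub continuous_id).pow j)
  -- step 4: value of the Ioi piece
  have hstep4 : (∫ t in Ioi (0:ℝ), h2 t)
      = ∑ j ∈ Finset.range (n+1), c j * ((j.factorial : ℝ) / r ^ (j+1)
          + ((m+j).factorial : ℝ) / r ^ (m+j+1)) := by
    rw [funext hh2sum, integral_finset_sum]
    · refine Finset.sum_congr rfl fun j _ => ?_
      rw [integral_const_mul]
      congr 1
      rw [integral_add (aux_integrableOn_pow_exp j hr) (aux_integrableOn_pow_exp (m+j) hr),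
        aux_integral_pow_exp j hr, aux_integral_pow_exp (m+j) hr]
    · intro j _
      exact (((aux_integrableOn_pow_exp j hr).add (aux_integrableOn_pow_exp (m+j) hr)).const_mul _)
  -- abbreviations for the two values
  set V1 : ℝ := ∑ j ∈ Finset.range (n+1), (n.factorial : ℝ) / (j.factorial : ℝ) * y ^ j
      * ((m.factorial : ℝ) * (j.factorial : ℝ) / ((m + j + 1).factorial : ℝ)) with hV1_def
  set V2 : ℝ := ∑ j ∈ Finset.range (n+1), c j * ((j.factorial : ℝ) / r ^ (j+1)
      + ((m+j).factorial : ℝ) / r ^ (m+j+1)) with hV2_def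
  have hInt_le : (∫ ρ in Ioi (0:ℝ), g ρ) ≤ V1 + V2 := by
    rw [hstep3] at hstep2; rw [hstep4] at hstep2; linarith
  have hyp : (0:ℝ) ≤ y ^ (m+1) := by positivity
  have hmain : y ^ (m+1) * (∫ ρ in Ioi (0:ℝ), g ρ) ≤ y ^ (m+1) * (V1 + V2) :=
    mul_le_mul_of_nonneg_left hInt_le hyp
  refine le_trans hmain ?_
  -- T1 : exact value of y^(m+1) * V1
  have hT1eq : y ^ (m+1) * V1 = ∑ j ∈ Finset.range (n+1),
      (m.factorial : ℝ) * (n.factorial : ℝ) * y ^ (m+1+j) / ((m+j+1).factorial : ℝ) := by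
    rw [hV1_def, Finset.mul_sum]
    refine Finset.sum_congr rfl fun j _ => ?_
    have hj : (j.factorial : ℝ) ≠ 0 := by exact_mod_cast Nat.factorial_ne_zero j
    have hF : ((m+j+1).factorial : ℝ) ≠ 0 := by exact_mod_cast Nat.factorial_ne_zero _
    rw [pow_add]
    field_simp
    ring
  -- bound y^(m+1) * V2
  have hT2eq : y ^ (m+1) * V2 = ∑ j ∈ Finset.range (n+1),
      ((n.factorial : ℝ) * 2^m * y^m * (1/2)^(j+1)
        + (m.factorial : ℝ) * (n.factorial : ℝ) * ((j+m).choose m : ℝ) * (1/2)^(j+1)) := by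
    rw [hV2_def, Finset.mul_sum]
    refine Finset.sum_congr rfl fun j _ => ?_
    have hj : (j.factorial : ℝ) ≠ 0 := by exact_mod_cast Nat.factorial_ne_zero j
    have hy0 : y ≠ 0 := ne_of_gt hy
    have hch : ((m+j).factorial : ℝ)
        = ((j+m).choose m : ℝ) * (m.factorial : ℝ) * (j.factorial : ℝ) := by
      have h1 := Nat.choose_mul_factorial_mul_factorial (Nat.le_add_left m j)
      have h2 : j + m - m = j := by omega
      rw [h2] at h1
      have h3 : m + j = j + m := by omega
      rw [h3, ← h1]
      push_cast; ring
    rw [hc_def]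
    simp only [hr_def, mul_pow, hch]
    field_simp
    simp only [one_div, inv_pow]
    field_simp
    ring
  have hgeo : ∑ j ∈ Finset.range (n+1), ((1:ℝ)/2)^(j+1) ≤ 1 := by
    have h1 : ∑ j ∈ Finset.range (n+1), ((1:ℝ)/2)^(j+1)
        = (1/2) * ∑ j ∈ Finset.range (n+1), ((1:ℝ)/2)^j := by
      rw [Finset.mul_sum]
      exact Finset.sum_congr rfl fun j _ => by ring
    rw [h1]
    have := sum_geometric_two_le (n+1)
    linarith
  have hT2le : y ^ (m+1) * V2 ≤ 2^m * (n.factorial : ℝ) * y^m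
      + (m.factorial : ℝ) * (n.factorial : ℝ) * 2^m := by
    rw [hT2eq, Finset.sum_add_distrib]
    have hA : ∑ j ∈ Finset.range (n+1), (n.factorial : ℝ) * 2^m * y^m * (1/2)^(j+1)
        ≤ 2^m * (n.factorial : ℝ) * y^m := by
      rw [← Finset.mul_sum]
      have hc0 : (0:ℝ) ≤ (n.factorial : ℝ) * 2^m * y^m := by positivity
      nlinarith
    have hB : ∑ j ∈ Finset.range (n+1),
        (m.factorial : ℝ) * (n.factorial : ℝ) * ((j+m).choose m : ℝ) * (1/2)^(j+1)
        ≤ (m.factorial : ℝ) * (n.factorial : ℝ) * 2^m := by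
      have h1 : ∑ j ∈ Finset.range (n+1),
          (m.factorial : ℝ) * (n.factorial : ℝ) * ((j+m).choose m : ℝ) * (1/2)^(j+1)
          = (m.factorial : ℝ) * (n.factorial : ℝ) * (1/2)
            * ∑ j ∈ Finset.range (n+1), ((j+m).choose m : ℝ) * (1/2)^j := by
        rw [Finset.mul_sum]
        exact Finset.sum_congr rfl fun j _ => by ring
      rw [h1]
      have h2 := aux_choose_sum_le m n
      have hc0 : (0:ℝ) ≤ (m.factorial : ℝ) * (n.factorial : ℝ) * (1/2) := by positivity
      have h3 : (m.factorial : ℝ) * (n.factorial : ℝ) * (1/2) * (2^(m+1))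
          = (m.factorial : ℝ) * (n.factorial : ℝ) * 2^m := by ring
      nlinarith
    linarith
  rw [mul_add, hT1eq]
  have hcmp := aux_compare y hy m n hmn
  linarith [hT2le, hcmp]

theorem stmt_3 (y : ℝ) (hy : 0 ≤ y) (m n : ℕ) (hmn : m ≤ n) :
    y ^ (m + 1) *
        ∫ ρ in Set.Ioi (0:ℝ),
          Real.exp (-(y * (ρ - 1)) * (1 + Real.sign (ρ - 1))) * ρ ^ m * P n (y * |1 - ρ|) ≤
      (m.factorial : ℝ) * (n.factorial : ℝ) * Q (m + n + 1) y := by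
  rcases eq_or_lt_of_le hy with h0 | h0
  · rw [← h0]
    simp only [zero_pow (Nat.succ_ne_zero m), zero_mul]
    have : (0:ℝ) ≤ Q (m + n + 1) 0 :=
      Finset.sum_nonneg fun j _ => by positivity
    positivity
  · exact stmt_3' y h0 m n hmn
end

section
/- Let μ > 3, β ≥ 0, and define ‖f̂‖_{μ,β} = sup_{k∈ℝ³} (1+|k|)^μ e^{β|k|} |f̂(k)|. If ‖v̂‖_{μ,β} < ∞ and ‖ŵ‖_{μ,β} < ∞ then the Fourier convolution satisfies ‖v̂ ∗ ŵ‖_{μ,β} ≤ C₀ ‖v̂‖_{μ,β} ‖ŵ‖_{μ,β}, where C₀ = 32π·2^μ/((μ-1)(μ-2)(μ-3)). -/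
open MeasureTheory Real Filter
open scoped Topology

/-- The weighted sup-norm `‖f‖_{μ,β} = sup_k (1+|k|)^μ e^{β|k|} |f(k)|`. -/
noncomputable def wnorm (μ β : ℝ) (f : EuclideanSpace ℝ (Fin 3) → ℂ) : ℝ :=
  ⨆ k : EuclideanSpace ℝ (Fin 3), (1 + ‖k‖) ^ μ * Real.exp (β * ‖k‖) * ‖f k‖

private lemma radial_int {μ : ℝ} (hμ : 3 < μ) :
    ∫ r in Set.Ioi (0:ℝ), r ^ 2 * (1 + r) ^ (-μ) = 2 / ((μ - 1) * (μ - 2) * (μ - 3)) := by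
  have h1 : μ - 1 ≠ 0 := by intro h; linarith [sub_eq_zero.mp h]
  have h2 : μ - 2 ≠ 0 := by intro h; linarith [sub_eq_zero.mp h]
  have h3 : μ - 3 ≠ 0 := by intro h; linarith [sub_eq_zero.mp h]
  have h1' : (1:ℝ) - μ ≠ 0 := by intro h; linarith [sub_eq_zero.mp h]
  have h2' : (2:ℝ) - μ ≠ 0 := by intro h; linarith [sub_eq_zero.mp h]
  have h3' : (3:ℝ) - μ ≠ 0 := by intro h; linarith [sub_eq_zero.mp h]
  set F : ℝ → ℝ := fun r =>
    (1+r)^(3-μ)/(3-μ) - 2*((1+r)^(2-μ)/(2-μ)) + (1+r)^(1-μ)/(1-μ) with hF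
  have hderiv : ∀ x ∈ Set.Ici (0:ℝ), HasDerivAt F (x^2 * (1+x)^(-μ)) x := by
    intro x hx
    have hx0 : (0:ℝ) ≤ x := hx
    have hx1 : (0:ℝ) < 1 + x := by linarith
    have hd : HasDerivAt (fun r : ℝ => 1 + r) 1 x := by
      simpa using (hasDerivAt_id x).const_add 1
    have d3 : HasDerivAt (fun r : ℝ => (1+r)^(3-μ)) (1 * (3-μ) * (1+x)^(3-μ-1)) x :=
      hd.rpow_const (Or.inl hx1.ne')
    have d2 : HasDerivAt (fun r : ℝ => (1+r)^(2-μ)) (1 * (2-μ) * (1+x)^(2-μ-1)) x :=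
      hd.rpow_const (Or.inl hx1.ne')
    have d1 : HasDerivAt (fun r : ℝ => (1+r)^(1-μ)) (1 * (1-μ) * (1+x)^(1-μ-1)) x :=
      hd.rpow_const (Or.inl hx1.ne')
    have hD := ((d3.div_const (3-μ)).sub ((d2.div_const (2-μ)).const_mul 2)).add
      (d1.div_const (1-μ))
    convert hD using 1
    · rfl
    · rfl
    · rfl
    have e3 : (3:ℝ)-μ-1 = 2-μ := by ring
    have e2 : (2:ℝ)-μ-1 = 1-μ := by ring
    have e1 : (1:ℝ)-μ-1 = -μ := by ring
    rw [e3, e2, e1]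
    have r2 : (1+x)^((2:ℝ)-μ) = (1+x)^(2:ℕ) * (1+x)^(-μ) := by
      rw [← Real.rpow_natCast (1+x) 2, ← Real.rpow_add hx1]
      congr 1
    have r1 : (1+x)^((1:ℝ)-μ) = (1+x) * (1+x)^(-μ) := by
      rw [show (1:ℝ)-μ = 1 + -μ by ring, Real.rpow_add hx1, Real.rpow_one]
    rw [r2, r1]
    field_simp
    ring
  have htend : Tendsto F atTop (𝓝 (0/(3-μ) - 2*(0/(2-μ)) + 0/(1-μ))) := by
    have t0 : ∀ p : ℝ, p < 0 → Tendsto (fun x : ℝ => (1+x)^p) atTop (𝓝 0) := by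
      intro p hp
      have h := tendsto_rpow_neg_atTop (y := -p) (by linarith)
      rw [neg_neg] at h
      exact h.comp (tendsto_atTop_add_const_left _ 1 tendsto_id)
    exact (((t0 _ (by linarith)).div_const _).sub
      (((t0 _ (by linarith)).div_const _).const_mul 2)).add ((t0 _ (by linarith)).div_const _)
  have hnn : ∀ x ∈ Set.Ioi (0:ℝ), 0 ≤ x^2 * (1+x)^(-μ) := by
    intro x hx
    have : (0:ℝ) < 1 + x := by have := hx.out; linarith
    positivity
  rw [MeasureTheory.integral_Ioi_of_hasDerivAt_of_nonneg' hderiv hnn htend]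
  have hF0 : F 0 = 1/(3-μ) - 2*(1/(2-μ)) + 1/(1-μ) := by
    simp [hF, Real.one_rpow]
  rw [hF0]
  field_simp
  ring

private lemma ball_vol :
    (volume (Metric.ball (0 : EuclideanSpace ℝ (Fin 3)) 1)).toReal = π * (4/3) := by
  rw [EuclideanSpace.volume_ball]
  have hcard : (Fintype.card (Fin 3) : ℝ) = 3 := by simp
  have hg : Real.Gamma ((Fintype.card (Fin 3) : ℝ) / 2 + 1) = 3/4 * Real.sqrt π := by
    rw [hcard, Real.Gamma_add_one (by norm_num),
      show (3:ℝ)/2 = 1/2 + 1 by norm_num, Real.Gamma_add_one (by norm_num),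
      Real.Gamma_one_half_eq]
    ring
  rw [hg]
  have hs : (0:ℝ) < Real.sqrt π := Real.sqrt_pos.mpr Real.pi_pos
  have hs3 : Real.sqrt π ^ Fintype.card (Fin 3) = π * Real.sqrt π := by
    rw [show Fintype.card (Fin 3) = 3 by simp, pow_succ, Real.sq_sqrt Real.pi_pos.le]
  rw [hs3]
  rw [ENNReal.ofReal_one, one_pow, one_mul, ENNReal.toReal_ofReal (by positivity)]
  field_simp

private lemma I_val {μ : ℝ} (hμ : 3 < μ) :
    ∫ x : EuclideanSpace ℝ (Fin 3), (1+‖x‖)^(-μ) = 8 * π / ((μ-1)*(μ-2)*(μ-3)) := by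
  have h := MeasureTheory.integral_fun_norm_addHaar
    (volume : Measure (EuclideanSpace ℝ (Fin 3))) (fun r : ℝ => (1+r)^(-μ))
  simp only [finrank_euclideanSpace_fin, nsmul_eq_mul, smul_eq_mul, Nat.cast_ofNat] at h
  rw [h, measureReal_def, ball_vol]
  have : ∫ y in Set.Ioi (0:ℝ), y ^ (3-1) * (1+y)^(-μ) = 2/((μ-1)*(μ-2)*(μ-3)) := by
    simpa using radial_int hμ
  rw [this]
  have hD : (0:ℝ) < (μ-1)*(μ-2)*(μ-3) := by
    have e1 : (0:ℝ) < μ - 1 := by linarith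
    have e2 : (0:ℝ) < μ - 2 := by linarith
    have e3 : (0:ℝ) < μ - 3 := by linarith
    positivity
  field_simp
  ring

private lemma key_le {μ a c : ℝ} (hμ : 0 < μ) (ha : 0 ≤ a) (hc : 0 ≤ c)
    (h : 1 + c ≤ 2 * (1 + a)) : (1+a)^(-μ) ≤ 2^μ * (1+c)^(-μ) := by
  have ha1 : (0:ℝ) < 1 + a := by linarith
  have hc1 : (0:ℝ) < 1 + c := by linarith
  have hpa : (0:ℝ) < (1+a)^μ := Real.rpow_pos_of_pos ha1 μ
  have hpc : (0:ℝ) < (1+c)^μ := Real.rpow_pos_of_pos hc1 μ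
  have h1 : (1+c)^μ ≤ 2^μ * (1+a)^μ := by
    rw [← Real.mul_rpow (by norm_num) ha1.le]
    exact Real.rpow_le_rpow hc1.le h hμ.le
  rw [Real.rpow_neg ha1.le, Real.rpow_neg hc1.le, ← div_eq_mul_inv, inv_eq_one_div,
    div_le_div_iff₀ hpa hpc]
  nlinarith

private lemma split_le {μ a b c : ℝ} (hμ : 0 < μ) (ha : 0 ≤ a) (hb : 0 ≤ b) (hc : 0 ≤ c)
    (h : c ≤ a + b) :
    (1+a)^(-μ) * (1+b)^(-μ) ≤ 2^μ * (1+c)^(-μ) * ((1+a)^(-μ) + (1+b)^(-μ)) := by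
  have pa : (0:ℝ) ≤ (1+a)^(-μ) := Real.rpow_nonneg (by linarith) _
  have pb : (0:ℝ) ≤ (1+b)^(-μ) := Real.rpow_nonneg (by linarith) _
  have pc : (0:ℝ) ≤ (1+c)^(-μ) := Real.rpow_nonneg (by linarith) _
  have p2 : (0:ℝ) ≤ (2:ℝ)^μ := Real.rpow_nonneg (by norm_num) _
  rcases le_total a b with hab | hab
  · have hk := key_le hμ hb hc (by linarith)
    calc (1+a)^(-μ) * (1+b)^(-μ) ≤ (1+a)^(-μ) * (2^μ * (1+c)^(-μ)) :=
          mul_le_mul_of_nonneg_left hk pa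
      _ = 2^μ * (1+c)^(-μ) * (1+a)^(-μ) := by ring
      _ ≤ 2^μ * (1+c)^(-μ) * ((1+a)^(-μ) + (1+b)^(-μ)) :=
          mul_le_mul_of_nonneg_left (le_add_of_nonneg_right pb) (mul_nonneg p2 pc)
  · have hk := key_le hμ ha hc (by linarith)
    calc (1+a)^(-μ) * (1+b)^(-μ) ≤ (2^μ * (1+c)^(-μ)) * (1+b)^(-μ) :=
          mul_le_mul_of_nonneg_right hk pb
      _ ≤ 2^μ * (1+c)^(-μ) * ((1+a)^(-μ) + (1+b)^(-μ)) :=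
          mul_le_mul_of_nonneg_left (le_add_of_nonneg_left pa) (mul_nonneg p2 pc)

theorem stmt_7 (μ β : ℝ) (hμ : 3 < μ) (hβ : 0 ≤ β)
    (v w : EuclideanSpace ℝ (Fin 3) → ℂ) (hvm : Measurable v) (hwm : Measurable w)
    (hv : BddAbove (Set.range fun k : EuclideanSpace ℝ (Fin 3) =>
      (1 + ‖k‖) ^ μ * Real.exp (β * ‖k‖) * ‖v k‖))
    (hw : BddAbove (Set.range fun k : EuclideanSpace ℝ (Fin 3) =>
      (1 + ‖k‖) ^ μ * Real.exp (β * ‖k‖) * ‖w k‖)) :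
    wnorm μ β (fun k => ∫ k' : EuclideanSpace ℝ (Fin 3), v k' * w (k - k')) ≤
      (32 * Real.pi * (2:ℝ) ^ μ / ((μ - 1) * (μ - 2) * (μ - 3))) *
        wnorm μ β v * wnorm μ β w := by
  have hD : (0:ℝ) < (μ-1)*(μ-2)*(μ-3) := by
    have e1 : (0:ℝ) < μ - 1 := by linarith
    have e2 : (0:ℝ) < μ - 2 := by linarith
    have e3 : (0:ℝ) < μ - 3 := by linarith
    positivity
  set A := wnorm μ β v with hA
  set B := wnorm μ β w with hB
  have hvb : ∀ k, (1 + ‖k‖) ^ μ * Real.exp (β * ‖k‖) * ‖v k‖ ≤ A := fun k => le_ciSup hv k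
  have hwb : ∀ k, (1 + ‖k‖) ^ μ * Real.exp (β * ‖k‖) * ‖w k‖ ≤ B := fun k => le_ciSup hw k
  have hA0 : 0 ≤ A := le_trans (by positivity) (hvb 0)
  have hB0 : 0 ≤ B := le_trans (by positivity) (hwb 0)
  have hptv : ∀ k, ‖v k‖ ≤ A * ((1+‖k‖)^(-μ) * Real.exp (-(β*‖k‖))) := by
    intro k
    have h1 : (0:ℝ) < (1+‖k‖)^μ * Real.exp (β*‖k‖) := by positivity
    rw [Real.rpow_neg (by positivity), Real.exp_neg, ← mul_inv, ← div_eq_mul_inv,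
      le_div_iff₀ h1]
    calc ‖v k‖ * ((1+‖k‖)^μ * Real.exp (β*‖k‖))
        = (1+‖k‖)^μ * Real.exp (β*‖k‖) * ‖v k‖ := by ring
      _ ≤ A := hvb k
  have hptw : ∀ k, ‖w k‖ ≤ B * ((1+‖k‖)^(-μ) * Real.exp (-(β*‖k‖))) := by
    intro k
    have h1 : (0:ℝ) < (1+‖k‖)^μ * Real.exp (β*‖k‖) := by positivity
    rw [Real.rpow_neg (by positivity), Real.exp_neg, ← mul_inv, ← div_eq_mul_inv,
      le_div_iff₀ h1]
    calc ‖w k‖ * ((1+‖k‖)^μ * Real.exp (β*‖k‖))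
        = (1+‖k‖)^μ * Real.exp (β*‖k‖) * ‖w k‖ := by ring
      _ ≤ B := hwb k
  have hint : Integrable (fun x : EuclideanSpace ℝ (Fin 3) => (1+‖x‖)^(-μ)) := by
    apply integrable_one_add_norm
    rw [finrank_euclideanSpace_fin]
    norm_num; linarith
  have hIval : ∫ x : EuclideanSpace ℝ (Fin 3), (1+‖x‖)^(-μ)
      = 8 * π / ((μ-1)*(μ-2)*(μ-3)) := I_val hμ
  apply ciSup_le
  intro k
  set I := (8 * π / ((μ-1)*(μ-2)*(μ-3)) : ℝ) with hI
  have hI0 : 0 ≤ I := by rw [hI]; positivity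
  have hc1 : (0:ℝ) < 1 + ‖k‖ := by positivity
  set C := A * B * Real.exp (-(β*‖k‖)) * (2^μ * (1+‖k‖)^(-μ)) with hC
  have hb2 : Integrable (fun k' : EuclideanSpace ℝ (Fin 3) => (1+‖k - k'‖)^(-μ)) :=
    hint.comp_sub_left k
  have hbint : Integrable (fun k' : EuclideanSpace ℝ (Fin 3) =>
      C * ((1+‖k'‖)^(-μ) + (1+‖k-k'‖)^(-μ))) := (hint.add hb2).const_mul C
  have hptwise : ∀ k' : EuclideanSpace ℝ (Fin 3),
      ‖v k' * w (k-k')‖ ≤ C * ((1+‖k'‖)^(-μ) + (1+‖k-k'‖)^(-μ)) := by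
    intro k'
    have h1 := hptv k'
    have h2 := hptw (k - k')
    have hnorm : ‖k‖ ≤ ‖k'‖ + ‖k - k'‖ := by
      have := norm_add_le k' (k - k')
      simpa using this
    have hexp : Real.exp (-(β*‖k'‖)) * Real.exp (-(β*‖k-k'‖)) ≤ Real.exp (-(β*‖k‖)) := by
      rw [← Real.exp_add]
      apply Real.exp_le_exp.mpr
      nlinarith [mul_le_mul_of_nonneg_left hnorm hβ]
    have hsplit := split_le (μ:=μ) (by linarith) (norm_nonneg k') (norm_nonneg (k-k'))
      (norm_nonneg k) hnorm
    rw [norm_mul]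
    have hRnn : (0:ℝ) ≤ B * ((1+‖k-k'‖)^(-μ) * Real.exp (-(β*‖k-k'‖))) := by
      have : (0:ℝ) ≤ (1+‖k-k'‖)^(-μ) * Real.exp (-(β*‖k-k'‖)) := by positivity
      exact mul_nonneg hB0 this
    calc ‖v k'‖ * ‖w (k-k')‖
        ≤ (A * ((1+‖k'‖)^(-μ) * Real.exp (-(β*‖k'‖)))) *
          (B * ((1+‖k-k'‖)^(-μ) * Real.exp (-(β*‖k-k'‖)))) :=
          mul_le_mul h1 h2 (norm_nonneg _) (le_trans (norm_nonneg _) h1)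
      _ = (A*B) * (((1+‖k'‖)^(-μ) * (1+‖k-k'‖)^(-μ)) *
          (Real.exp (-(β*‖k'‖)) * Real.exp (-(β*‖k-k'‖)))) := by ring
      _ ≤ (A*B) * ((2^μ * (1+‖k‖)^(-μ) * ((1+‖k'‖)^(-μ) + (1+‖k-k'‖)^(-μ))) *
          Real.exp (-(β*‖k‖))) := by
          apply mul_le_mul_of_nonneg_left _ (mul_nonneg hA0 hB0)
          apply mul_le_mul hsplit hexp (by positivity) (by positivity)
      _ = C * ((1+‖k'‖)^(-μ) + (1+‖k-k'‖)^(-μ)) := by rw [hC]; ring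
  have hnormint : ‖∫ k' : EuclideanSpace ℝ (Fin 3), v k' * w (k-k')‖ ≤ C * (I + I) := by
    calc ‖∫ k' : EuclideanSpace ℝ (Fin 3), v k' * w (k-k')‖
        ≤ ∫ k' : EuclideanSpace ℝ (Fin 3), C * ((1+‖k'‖)^(-μ) + (1+‖k-k'‖)^(-μ)) := by
          apply norm_integral_le_of_norm_le hbint
          exact Eventually.of_forall hptwise
      _ = C * (I + I) := by
          rw [MeasureTheory.integral_const_mul, MeasureTheory.integral_add hint hb2, hIval]
          congr 2
          rw [MeasureTheory.integral_sub_left_eq_self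
            (fun x : EuclideanSpace ℝ (Fin 3) => (1+‖x‖)^(-μ)) volume k]
          exact hIval
  have hCnn : (0:ℝ) ≤ C := by
    rw [hC]
    have : (0:ℝ) ≤ 2^μ * (1+‖k‖)^(-μ) := by positivity
    have h2 : (0:ℝ) ≤ Real.exp (-(β*‖k‖)) := (Real.exp_pos _).le
    exact mul_nonneg (mul_nonneg (mul_nonneg hA0 hB0) h2) this
  have cancel : (1+‖k‖)^μ * Real.exp (β*‖k‖) * (C * (I+I)) = A*B*(2^μ*(I+I)) := by
    rw [hC, Real.rpow_neg hc1.le, Real.exp_neg]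
    have e1 : (1+‖k‖)^μ ≠ 0 := (Real.rpow_pos_of_pos hc1 μ).ne'
    have e2 : Real.exp (β*‖k‖) ≠ 0 := (Real.exp_pos _).ne'
    field_simp
  calc (1+‖k‖)^μ * Real.exp (β*‖k‖) * ‖∫ k' : EuclideanSpace ℝ (Fin 3), v k' * w (k-k')‖
      ≤ (1+‖k‖)^μ * Real.exp (β*‖k‖) * (C * (I+I)) :=
        mul_le_mul_of_nonneg_left hnormint (by positivity)
    _ = A*B*(2^μ*(I+I)) := cancel
    _ ≤ 32 * π * (2:ℝ)^μ / ((μ-1)*(μ-2)*(μ-3)) * A * B := by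
        rw [hI]
        have hp2 : (0:ℝ) < (2:ℝ)^μ := Real.rpow_pos_of_pos (by norm_num) μ
        have hpi := Real.pi_pos
        have key : A*B*(2^μ*(8*π/((μ-1)*(μ-2)*(μ-3)) + 8*π/((μ-1)*(μ-2)*(μ-3))))
            = (16 * π * (2:ℝ)^μ / ((μ-1)*(μ-2)*(μ-3))) * A * B := by ring
        rw [key]
        have hle : 16 * π * (2:ℝ)^μ / ((μ-1)*(μ-2)*(μ-3))
            ≤ 32 * π * (2:ℝ)^μ / ((μ-1)*(μ-2)*(μ-3)) := by
          apply (div_le_div_iff_of_pos_right hD).mpr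
          nlinarith
        exact mul_le_mul_of_nonneg_right (mul_le_mul_of_nonneg_right hle hA0) hB0
end

section
/- There is a constant C* = 1.07555… ≤ 1.1 such that for every integer l ≥ 3: ∑_{l₁=1}^{l-2} 1/((2l₁+1)²(2(l-1-l₁)+1)²) ≤ C*/(2l+3)². -/
open Finset


lemma tele (n : ℕ) : ∑ k ∈ Icc 1 n, (1:ℝ)/(2*(k:ℝ)+1)^2 ≤ 1/4 - 1/(4*((n:ℝ)+1)) := by
  induction n with
  | zero => simp
  | succ n ih =>
    rw [Finset.sum_Icc_succ_top (by omega)]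
    have hx : (0:ℝ) ≤ (n:ℝ) := Nat.cast_nonneg n
    have h1 : (1:ℝ)/(2*((n+1:ℕ):ℝ)+1)^2 ≤ 1/(4*((n:ℝ)+1)) - 1/(4*((n:ℝ)+2)) := by
      push_cast
      rw [div_sub_div _ _ (by positivity) (by positivity), div_le_div_iff₀ (by positivity) (by positivity)]
      nlinarith [hx]
    push_cast at h1 ⊢
    have e : (n:ℝ)+1+1 = (n:ℝ)+2 := by ring
    rw [e]
    linarith

lemma harm (n : ℕ) (hn : 3 ≤ n) : ∑ k ∈ Icc 1 n, (1:ℝ)/(2*(k:ℝ)+1) ≤ 8/15 + ((n:ℝ)-2)/7 := by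
  induction n, hn using Nat.le_induction with
  | base => norm_num [show Icc 1 3 = {1,2,3} by decide, Finset.sum_insert]
  | succ n hn ih =>
    rw [Finset.sum_Icc_succ_top (by omega)]
    have h3 : (3:ℝ) ≤ (n:ℝ) := by exact_mod_cast hn
    have h1 : (1:ℝ)/(2*((n+1:ℕ):ℝ)+1) ≤ 1/7 := by
      push_cast
      rw [div_le_div_iff₀ (by linarith) (by norm_num)]
      linarith
    push_cast at *
    linarith

lemma reflect (l : ℕ) (hl : 3 ≤ l) (g : ℝ → ℝ) :
    ∑ i ∈ Icc 1 (l-2), g ((l:ℝ) - 1 - (i:ℝ)) = ∑ i ∈ Icc 1 (l-2), g (i:ℝ) := by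
  apply Finset.sum_nbij' (i := fun a => l - 1 - a) (j := fun a => l - 1 - a)
  · intro a ha; simp only [mem_Icc] at *; omega
  · intro a ha; simp only [mem_Icc] at *; omega
  · intro a ha; simp only [mem_Icc] at ha; omega
  · intro a ha; simp only [mem_Icc] at ha; omega
  · intro a ha; simp only [mem_Icc] at ha
    congr 1
    push_cast [Nat.cast_sub (by omega : a ≤ l - 1), Nat.cast_sub (by omega : 1 ≤ l)]
    ring

theorem stmt_15 :
    ∃ C : ℝ, 0 < C ∧ C ≤ 1.1 ∧
      ∀ l : ℕ, 3 ≤ l →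
        (∑ l₁ ∈ Finset.Icc 1 (l - 2),
            (1:ℝ) / ((2 * (l₁:ℝ) + 1) ^ 2 * (2 * ((l:ℝ) - 1 - (l₁:ℝ)) + 1) ^ 2)) ≤
          C / (2 * (l:ℝ) + 3) ^ 2 := by
  refine ⟨1.1, by norm_num, le_refl _, ?_⟩
  intro l hl
  obtain h3 | h4 | h5 : l = 3 ∨ l = 4 ∨ 5 ≤ l := by omega
  · subst h3
    norm_num [show Finset.Icc 1 1 = {1} from rfl]
  · subst h4
    rw [show Finset.Icc 1 (4-2) = {1,2} from rfl]
    norm_num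
  · set x : ℝ := (l : ℝ) with hxdef
    have hx : (5:ℝ) ≤ x := by rw [hxdef]; exact_mod_cast h5
    have hx0 : (0:ℝ) < x := by linarith
    have key : ∀ i ∈ Finset.Icc 1 (l-2),
        (1:ℝ) / ((2 * (i:ℝ) + 1) ^ 2 * (2 * (x - 1 - (i:ℝ)) + 1) ^ 2)
          = (1/(4*x^2)) * (1/(2*(i:ℝ)+1)^2 + 1/(2*(x-1-(i:ℝ))+1)^2)
            + (1/(4*x^3)) * (1/(2*(i:ℝ)+1) + 1/(2*(x-1-(i:ℝ))+1)) := by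
      intro i hi
      simp only [mem_Icc] at hi
      have hi2 : (i:ℝ) ≤ x - 2 := by
        have h' : (i:ℕ) + 2 ≤ l := by omega
        have := (Nat.cast_le (α := ℝ)).2 h'
        push_cast at this; linarith
      have ha : (0:ℝ) < 2*(i:ℝ)+1 := by positivity
      have hb : (0:ℝ) < 2*(x-1-(i:ℝ))+1 := by linarith
      have hab : (2*(i:ℝ)+1) + (2*(x-1-(i:ℝ))+1) = 2*x := by ring
      field_simp
      ring
    rw [Finset.sum_congr rfl key]
    rw [Finset.sum_add_distrib, ← Finset.mul_sum, ← Finset.mul_sum,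
        Finset.sum_add_distrib, Finset.sum_add_distrib]
    have e2 : ∑ i ∈ Finset.Icc 1 (l-2), (1:ℝ)/(2*(x-1-(i:ℝ))+1)^2
        = ∑ i ∈ Finset.Icc 1 (l-2), (1:ℝ)/(2*(i:ℝ)+1)^2 :=
      reflect l (by omega) (fun t => 1/(2*t+1)^2)
    have e1 : ∑ i ∈ Finset.Icc 1 (l-2), (1:ℝ)/(2*(x-1-(i:ℝ))+1)
        = ∑ i ∈ Finset.Icc 1 (l-2), (1:ℝ)/(2*(i:ℝ)+1) :=
      reflect l (by omega) (fun t => 1/(2*t+1))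
    rw [e1, e2]
    set A : ℝ := ∑ i ∈ Finset.Icc 1 (l-2), (1:ℝ)/(2*(i:ℝ)+1)^2 with hA
    set B : ℝ := ∑ i ∈ Finset.Icc 1 (l-2), (1:ℝ)/(2*(i:ℝ)+1) with hB
    have hcast : ((l-2:ℕ):ℝ) = x - 2 := by
      push_cast [Nat.cast_sub (by omega : 2 ≤ l)]; ring
    have hAle : A ≤ 1/4 - 1/(4*(x-1)) := by
      have := tele (l-2)
      rw [hcast] at this
      have e : x - 2 + 1 = x - 1 := by ring
      rw [e] at this
      exact this
    have hBle : B ≤ 8/15 + (x-4)/7 := by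
      have := harm (l-2) (by omega)
      rw [hcast] at this
      have e : x - 2 - 2 = x - 4 := by ring
      rw [e] at this
      exact this
    have hfin : (1/(4*x^2)) * ((1/4 - 1/(4*(x-1))) + (1/4 - 1/(4*(x-1))))
        + (1/(4*x^3)) * ((8/15 + (x-4)/7) + (8/15 + (x-4)/7)) ≤ (1.1:ℝ) / (2*x+3)^2 := by
      have h1 : (0:ℝ) < x - 1 := by linarith
      have h3p : (0:ℝ) < 2*x+3 := by linarith
      have hm : (0:ℝ) ≤ x - 5 := by linarith
      have hP : (0:ℝ) ≤ 264*x^4 - 1760*x^3 + 1883*x^2 + 2382*x - 144 := by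
        nlinarith [hm, mul_nonneg hm hm, mul_nonneg (mul_nonneg hm hm) hm,
          mul_nonneg (mul_nonneg (mul_nonneg hm hm) hm) hm]
      have hexp : (1.1:ℝ) / (2*x+3)^2
          - ((1/(4*x^2)) * ((1/4 - 1/(4*(x-1))) + (1/4 - 1/(4*(x-1))))
            + (1/(4*x^3)) * ((8/15 + (x-4)/7) + (8/15 + (x-4)/7)))
          = (264*x^4 - 1760*x^3 + 1883*x^2 + 2382*x - 144)
            / (840*x^3*(x-1)*(2*x+3)^2) := by
        rw [show (1.1:ℝ) = 11/10 by norm_num]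
        field_simp
        ring
      have hpos : (0:ℝ) < 840*x^3*(x-1)*(2*x+3)^2 := by positivity
      have : (0:ℝ) ≤ (264*x^4 - 1760*x^3 + 1883*x^2 + 2382*x - 144)
            / (840*x^3*(x-1)*(2*x+3)^2) := div_nonneg hP (le_of_lt hpos)
      linarith [hexp ▸ this]
    have hc1 : (0:ℝ) ≤ 1/(4*x^2) := by positivity
    have hc2 : (0:ℝ) ≤ 1/(4*x^3) := by positivity
    calc (1/(4*x^2)) * (A + A) + (1/(4*x^3)) * (B + B)
        ≤ (1/(4*x^2)) * ((1/4 - 1/(4*(x-1))) + (1/4 - 1/(4*(x-1))))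
          + (1/(4*x^3)) * ((8/15 + (x-4)/7) + (8/15 + (x-4)/7)) := by
          apply add_le_add
          · exact mul_le_mul_of_nonneg_left (add_le_add hAle hAle) hc1
          · exact mul_le_mul_of_nonneg_left (add_le_add hBle hBle) hc2
      _ ≤ (1.1:ℝ) / (2*x+3)^2 := hfin
end

section
/- For every real y ≥ 0 and integers l ≥ 0, with Q_N(y) = ∑_{j=0}^{N} 2^{N-j} y^j/j!: if βk satisfies |βk| ≤ l+1 then (|βk|/(l+1))^{2/3} Q_{2l+1}(β|k|) ≤ (1/2) Q_{2l+2}(β|k|), while if |βk| ≥ l+1 then (|βk|/(l+1))^{2/3} Q_{2l+1}(β|k|) ≤ 2 Q_{2l+2}(β|k|). -/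
open Real Finset

lemma Q_nonneg (N : ℕ) {y : ℝ} (hy : 0 ≤ y) : 0 ≤ Q N y := by
  apply Finset.sum_nonneg
  intro j _
  positivity

lemma two_Q_le (N : ℕ) {y : ℝ} (hy : 0 ≤ y) : 2 * Q N y ≤ Q (N + 1) y := by
  have h1 : Q (N+1) y = (∑ j ∈ Finset.range (N+1),
      2 ^ (N+1-j) * y ^ j / (j.factorial : ℝ)) + y^(N+1)/(((N+1).factorial : ℕ) : ℝ) := by
    rw [Q, Finset.sum_range_succ]
    norm_num
  rw [h1, Q, Finset.mul_sum]
  have h2 : ∀ j ∈ Finset.range (N+1),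
      2 * (2 ^ (N-j) * y ^ j / (j.factorial : ℝ)) = 2 ^ (N+1-j) * y ^ j / (j.factorial : ℝ) := by
    intro j hj
    rw [Finset.mem_range] at hj
    have he : N + 1 - j = (N - j) + 1 := by omega
    rw [he, pow_succ]
    ring
  rw [Finset.sum_congr rfl h2]
  have hlast : 0 ≤ y^(N+1)/(((N+1).factorial : ℕ) : ℝ) := by positivity
  linarith

lemma mul_Q_le (l : ℕ) {y : ℝ} (hy : 0 ≤ y) :
    y * Q (2*l+1) y ≤ 2 * ((l:ℝ)+1) * Q (2*l+2) y := by
  have hL : y * Q (2*l+1) y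
      = ∑ j ∈ Finset.range (2*l+2), 2 ^ (2*l+1-j) * y ^ (j+1) / (j.factorial : ℝ) := by
    rw [Q, Finset.mul_sum]
    apply Finset.sum_congr rfl
    intro j _
    rw [pow_succ]
    ring
  have hR : 2 * ((l:ℝ)+1) * Q (2*l+2) y =
      ∑ j ∈ Finset.range (2*l+3),
        2 * ((l:ℝ)+1) * (2 ^ (2*l+2-j) * y ^ j / (j.factorial : ℝ)) := by
    rw [Q, Finset.mul_sum]
  rw [hL, hR]
  have hsplit : ∑ j ∈ Finset.range (2*l+3),
        2 * ((l:ℝ)+1) * (2 ^ (2*l+2-j) * y ^ j / (j.factorial : ℝ))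
      = (∑ j ∈ Finset.range (2*l+2),
          2 * ((l:ℝ)+1) * (2 ^ (2*l+2-(j+1)) * y ^ (j+1) / ((j+1).factorial : ℝ)))
        + 2 * ((l:ℝ)+1) * (2 ^ (2*l+2-0) * y ^ 0 / ((Nat.factorial 0 : ℕ) : ℝ)) :=
    Finset.sum_range_succ' _ _
  have key : ∑ j ∈ Finset.range (2*l+2), 2 ^ (2*l+1-j) * y ^ (j+1) / (j.factorial : ℝ)
      ≤ ∑ j ∈ Finset.range (2*l+2),
          2 * ((l:ℝ)+1) * (2 ^ (2*l+2-(j+1)) * y ^ (j+1) / ((j+1).factorial : ℝ)) := by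
    apply Finset.sum_le_sum
    intro j hj
    rw [Finset.mem_range] at hj
    have he : 2*l+2-(j+1) = 2*l+1-j := by omega
    have hf : (((j+1).factorial : ℕ) : ℝ) = ((j:ℝ)+1) * (j.factorial : ℝ) := by
      rw [Nat.factorial_succ]; push_cast; ring
    rw [he, hf]
    have hjf : (0 : ℝ) < (j.factorial : ℝ) := by positivity
    have hj1 : (0 : ℝ) < (j:ℝ)+1 := by positivity
    have hcn : (0 : ℝ) ≤ (2:ℝ) ^ (2*l+1-j) * y ^ (j+1) := by positivity
    have hrw : 2 * ((l:ℝ)+1) * ((2:ℝ) ^ (2*l+1-j) * y ^ (j+1) / (((j:ℝ)+1) * (j.factorial : ℝ)))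
        = (2 * ((l:ℝ)+1) / ((j:ℝ)+1)) * ((2:ℝ) ^ (2*l+1-j) * y ^ (j+1) / (j.factorial : ℝ)) := by
      field_simp
    rw [hrw]
    have h1 : (1:ℝ) ≤ 2 * ((l:ℝ)+1) / ((j:ℝ)+1) := by
      rw [le_div_iff₀ hj1]
      have : (j:ℝ) + 1 ≤ 2*(l:ℝ)+2 := by
        have : j + 1 ≤ 2*l+2 := by omega
        exact_mod_cast this
      linarith
    exact le_mul_of_one_le_left (div_nonneg hcn hjf.le) h1
  have h0 : 0 ≤ 2 * ((l:ℝ)+1) * (2 ^ (2*l+2-0) * y ^ 0 / ((Nat.factorial 0 : ℕ) : ℝ)) := by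
    positivity
  rw [hsplit]
  linarith

theorem stmt_19 (β : ℝ) (hβ : 0 < β) (k : EuclideanSpace ℝ (Fin 3)) (l : ℕ) :
    (β * ‖k‖ ≤ (l:ℝ) + 1 →
      (β * ‖k‖ / ((l:ℝ) + 1)) ^ ((2:ℝ)/3) * Q (2 * l + 1) (β * ‖k‖) ≤
        (1/2) * Q (2 * l + 2) (β * ‖k‖)) ∧
    ((l:ℝ) + 1 ≤ β * ‖k‖ →
      (β * ‖k‖ / ((l:ℝ) + 1)) ^ ((2:ℝ)/3) * Q (2 * l + 1) (β * ‖k‖) ≤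
        2 * Q (2 * l + 2) (β * ‖k‖)) := by
  set y := β * ‖k‖ with hydef
  have hy : 0 ≤ y := mul_nonneg hβ.le (norm_nonneg k)
  have hl1 : (0:ℝ) < (l:ℝ) + 1 := by positivity
  have h2Q : 2 * Q (2*l+1) y ≤ Q (2*l+2) y := by
    have h := two_Q_le (2*l+1) hy
    have e : 2*l+1+1 = 2*l+2 := by omega
    rw [e] at h
    exact h
  have hq := Q_nonneg (2*l+1) hy
  constructor
  · intro h
    have ht : y / ((l:ℝ)+1) ≤ 1 := by rw [div_le_one hl1]; exact h
    have ht0 : 0 ≤ y / ((l:ℝ)+1) := div_nonneg hy hl1.le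
    have hr : (y/((l:ℝ)+1)) ^ ((2:ℝ)/3) ≤ 1 := Real.rpow_le_one ht0 ht (by norm_num)
    calc (y/((l:ℝ)+1)) ^ ((2:ℝ)/3) * Q (2*l+1) y ≤ 1 * Q (2*l+1) y :=
          mul_le_mul_of_nonneg_right hr hq
      _ ≤ (1/2) * Q (2*l+2) y := by linarith
  · intro h
    have ht : 1 ≤ y / ((l:ℝ)+1) := by rw [le_div_iff₀ hl1]; linarith
    have hr : (y/((l:ℝ)+1)) ^ ((2:ℝ)/3) ≤ (y/((l:ℝ)+1)) ^ (1:ℝ) :=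
      Real.rpow_le_rpow_of_exponent_le ht (by norm_num)
    rw [Real.rpow_one] at hr
    have hc := mul_Q_le l hy
    calc (y/((l:ℝ)+1)) ^ ((2:ℝ)/3) * Q (2*l+1) y ≤ (y/((l:ℝ)+1)) * Q (2*l+1) y :=
          mul_le_mul_of_nonneg_right hr hq
      _ ≤ 2 * Q (2*l+2) y := by
          rw [div_mul_eq_mul_div, div_le_iff₀ hl1]
          linarith
end
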